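/- Let X ∈ ℝ^{n×p} have full column rank, M = diag(m_1,…,m_n) with m_i > 0, and w_i(β) = exp(⟨x_i,β⟩)/(1+exp(⟨x_i,β⟩))^2. Define the penalized log-likelihood l*(β) = ∑_i [y_i⟨x_i,β⟩ − m_i log(1+exp(⟨x_i,β⟩))] + (1/2) log det(Xᵀ M W(β) X), where 0 ≤ y_i ≤ m_i are given reals. Then l* attains its supremum over ℝ^p, and the set of maximizers is bounded. -/

import Mathlib

open Matrix Finset in
lemma aux_quad {n p : ℕ} (X : Matrix (Fin n) (Fin p) ℝ) (d : Fin n → ℝ) (v : Fin p → ℝ) :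
    v ⬝ᵥ (X.transpose * Matrix.diagonal d * X) *ᵥ v = ∑ i, d i * ((X *ᵥ v) i) ^ 2 := by
  rw [← Matrix.mulVec_mulVec, ← Matrix.mulVec_mulVec, Matrix.dotProduct_mulVec,
    Matrix.vecMul_transpose, dotProduct]
  refine Finset.sum_congr rfl fun i _ => ?_
  rw [Matrix.mulVec_diagonal]
  ring

open Matrix Finset in
lemma aux_trace {n p : ℕ} (X : Matrix (Fin n) (Fin p) ℝ) (d : Fin n → ℝ) :
    (X.transpose * Matrix.diagonal d * X).trace = ∑ i, d i * ∑ j, (X i j) ^ 2 := by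
  rw [Matrix.mul_assoc, Matrix.trace]
  have key : ∀ j, ((X.transpose * (Matrix.diagonal d * X)).diag) j = ∑ i, d i * X i j ^ 2 := by
    intro j
    rw [Matrix.diag_apply, Matrix.mul_apply]
    refine Finset.sum_congr rfl fun i _ => ?_
    rw [Matrix.diagonal_mul, Matrix.transpose_apply]
    ring
  rw [Finset.sum_congr rfl (fun j _ => key j), Finset.sum_comm]
  refine Finset.sum_congr rfl fun i _ => ?_
  rw [Finset.mul_sum]

open Matrix Finset in
lemma aux_det_le {p : ℕ} (hp : 0 < p) (A : Matrix (Fin p) (Fin p) ℝ) (hA : A.PosSemidef)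
    (T : ℝ) (hT : A.trace ≤ T) (v : Fin p → ℝ) (hv : v ⬝ᵥ v = 1) :
    A.det ≤ (v ⬝ᵥ A *ᵥ v) * T ^ (p - 1) := by
  have hH := hA.1
  set U : Matrix (Fin p) (Fin p) ℝ := (hH.eigenvectorUnitary : Matrix (Fin p) (Fin p) ℝ) with hU
  have hUU : U * star U = 1 := (Matrix.mem_unitaryGroup_iff).mp hH.eigenvectorUnitary.2
  have hUU' : star U * U = 1 := (Matrix.mem_unitaryGroup_iff').mp hH.eigenvectorUnitary.2
  have hspec : A = U * Matrix.diagonal (RCLike.ofReal ∘ hH.eigenvalues) * star U :=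
    hH.spectral_theorem
  set lam := hH.eigenvalues with hlam
  have hdiag : Matrix.diagonal (RCLike.ofReal ∘ hH.eigenvalues) = Matrix.diagonal lam := rfl
  set c : Fin p → ℝ := (star U) *ᵥ v with hc
  have hvc : v ᵥ* U = c := by
    funext j
    simp [hc, Matrix.vecMul, Matrix.mulVec, dotProduct, conjTranspose_apply, mul_comm]
  have hray : v ⬝ᵥ A *ᵥ v = ∑ i, lam i * (c i) ^ 2 := by
    rw [hspec, hdiag]
    rw [← Matrix.mulVec_mulVec, ← Matrix.mulVec_mulVec, Matrix.dotProduct_mulVec, hvc,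
      dotProduct]
    refine Finset.sum_congr rfl fun i _ => ?_
    rw [Matrix.mulVec_diagonal]
    ring
  have hcc : ∑ i, (c i) ^ 2 = 1 := by
    have h1 : c ⬝ᵥ c = v ⬝ᵥ v := by
      nth_rewrite 1 [← hvc]
      rw [← Matrix.dotProduct_mulVec, hc, Matrix.mulVec_mulVec, hUU, Matrix.one_mulVec]
    rw [← hv, ← h1, dotProduct]
    exact Finset.sum_congr rfl fun i _ => (pow_two (c i))
  have hnn : ∀ i, 0 ≤ lam i := hA.eigenvalues_nonneg
  have htr : ∑ i, lam i = A.trace := by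
    have : A.trace = (U * Matrix.diagonal lam * star U).trace := by rw [← hdiag, ← hspec]
    rw [this, Matrix.trace_mul_cycle, hUU', Matrix.one_mul, Matrix.trace_diagonal]
  have hlamT : ∀ i, lam i ≤ T := by
    intro i
    calc lam i ≤ ∑ j, lam j := Finset.single_le_sum (fun j _ => hnn j) (Finset.mem_univ i)
    _ = A.trace := htr
    _ ≤ T := hT
  have hT0 : 0 ≤ T := le_trans (Finset.sum_nonneg fun i _ => hnn i) (htr ▸ hT)
  obtain ⟨i0, -, hi0⟩ := Finset.exists_min_image Finset.univ lam ⟨⟨0, hp⟩, Finset.mem_univ _⟩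
  have hdet : A.det = ∏ i, lam i := by
    have := hH.det_eq_prod_eigenvalues
    simpa using this
  have hprod : ∏ i, lam i ≤ lam i0 * T ^ (p - 1) := by
    rw [← Finset.mul_prod_erase Finset.univ lam (Finset.mem_univ i0)]
    refine mul_le_mul_of_nonneg_left ?_ (hnn i0)
    calc ∏ i ∈ Finset.univ.erase i0, lam i ≤ ∏ _i ∈ Finset.univ.erase i0, T :=
          Finset.prod_le_prod (fun i _ => hnn i) (fun i _ => hlamT i)
    _ = T ^ (p - 1) := by
        rw [Finset.prod_const, Finset.card_erase_of_mem (Finset.mem_univ i0)]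
        simp
  have hmin : lam i0 ≤ v ⬝ᵥ A *ᵥ v := by
    rw [hray]
    calc lam i0 = ∑ i, lam i0 * (c i) ^ 2 := by rw [← Finset.mul_sum, hcc, mul_one]
    _ ≤ ∑ i, lam i * (c i) ^ 2 :=
        Finset.sum_le_sum fun i _ =>
          mul_le_mul_of_nonneg_right (hi0 i (Finset.mem_univ i)) (sq_nonneg _)
  calc A.det = ∏ i, lam i := hdet
  _ ≤ lam i0 * T ^ (p - 1) := hprod
  _ ≤ (v ⬝ᵥ A *ᵥ v) * T ^ (p - 1) := mul_le_mul_of_nonneg_right hmin (pow_nonneg hT0 _)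

open Matrix Finset in
theorem stmt_6 (n p : ℕ) (X : Matrix (Fin n) (Fin p) ℝ)
    (hX : LinearIndependent ℝ (fun j : Fin p => (fun i => X i j : Fin n → ℝ)))
    (m y : Fin n → ℝ) (hm : ∀ i, 0 < m i) (hy : ∀ i, 0 ≤ y i ∧ y i ≤ m i)
    (w : ℝ → ℝ) (hw : ∀ z, w z = Real.exp z / (1 + Real.exp z) ^ 2)
    (W : EuclideanSpace ℝ (Fin p) → Matrix (Fin n) (Fin n) ℝ)
    (hW : ∀ β, W β = Matrix.diagonal (fun i => w (∑ j, X i j * β j)))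
    (lstar : EuclideanSpace ℝ (Fin p) → ℝ)
    (hl : ∀ β, lstar β =
      (∑ i, (y i * (∑ j, X i j * β j) - m i * Real.log (1 + Real.exp (∑ j, X i j * β j)))) +
        (1 / 2) * Real.log (X.transpose * Matrix.diagonal m * W β * X).det) :
    (∃ b : EuclideanSpace ℝ (Fin p), ∀ β, lstar β ≤ lstar b) ∧
      Bornology.IsBounded {β : EuclideanSpace ℝ (Fin p) | ∀ β', lstar β' ≤ lstar β} := by
  classical
  -- basic facts about w
  have hwpos : ∀ z, 0 < w z := by
    intro z; rw [hw]; positivity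
  have hw1 : ∀ z, w z ≤ 1 := by
    intro z; rw [hw, div_le_one (by positivity)]
    nlinarith [Real.exp_pos z]
  have hsym : ∀ z, w (-z) = w z := by
    intro z
    rw [hw, hw, Real.exp_neg]
    have h := Real.exp_pos z
    field_simp
    ring
  have hwz : ∀ z, w z * z ^ 2 ≤ 4 := by
    have hkey : ∀ z, 0 ≤ z → w z * z ^ 2 ≤ 4 := by
      intro z hz
      have hE : z / 2 + 1 ≤ Real.exp (z / 2) := Real.add_one_le_exp _
      have hE2 : Real.exp z = Real.exp (z / 2) * Real.exp (z / 2) := by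
        rw [← Real.exp_add]; ring_nf
      have hEpos := Real.exp_pos z
      have h3 : (1 + z / 2) ^ 2 ≤ Real.exp z := by nlinarith [Real.exp_pos (z / 2)]
      have h4 : z ^ 2 ≤ 4 * Real.exp z := by nlinarith
      rw [hw, div_mul_eq_mul_div, div_le_iff₀ (by positivity)]
      nlinarith
    intro z
    rcases le_or_gt 0 z with hz | hz
    · exact hkey z hz
    · have := hkey (-z) (by linarith)
      rw [hsym] at this
      simpa using this
  -- each likelihood term is nonpositive
  have hterm : ∀ i (z : ℝ), y i * z - m i * Real.log (1 + Real.exp z) ≤ 0 := by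
    intro i z
    have hexp := Real.exp_pos z
    have hlog1 : 0 ≤ Real.log (1 + Real.exp z) := Real.log_nonneg (by linarith)
    have hlog2 : z ≤ Real.log (1 + Real.exp z) := by
      calc z = Real.log (Real.exp z) := (Real.log_exp z).symm
      _ ≤ _ := Real.log_le_log (Real.exp_pos z) (by linarith)
    rcases le_or_gt 0 z with hz | hz
    · have h1 : y i * z ≤ m i * z := mul_le_mul_of_nonneg_right (hy i).2 hz
      have h2 : m i * z ≤ m i * Real.log (1 + Real.exp z) :=
        mul_le_mul_of_nonneg_left hlog2 (hm i).le
      linarith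
    · have h1 : y i * z ≤ 0 := mul_nonpos_of_nonneg_of_nonpos (hy i).1 hz.le
      have h2 : 0 ≤ m i * Real.log (1 + Real.exp z) := mul_nonneg (hm i).le hlog1
      linarith
  -- notation
  set zv : EuclideanSpace ℝ (Fin p) → Fin n → ℝ := fun β i => ∑ j, X i j * β j with hzv
  set d : EuclideanSpace ℝ (Fin p) → Fin n → ℝ := fun β i => m i * w (zv β i) with hd
  set A : EuclideanSpace ℝ (Fin p) → Matrix (Fin p) (Fin p) ℝ :=
    fun β => X.transpose * Matrix.diagonal (d β) * X with hA
  have hAeq : ∀ β, X.transpose * Matrix.diagonal m * W β * X = A β := by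
    intro β
    rw [hW, hA, Matrix.mul_assoc X.transpose (Matrix.diagonal m) _,
      Matrix.diagonal_mul_diagonal]
  have hmulVec : ∀ (β : EuclideanSpace ℝ (Fin p)), X *ᵥ (fun j => β j) = zv β := by
    intro β; funext i; simp [Matrix.mulVec, dotProduct, hzv]
  -- injectivity
  have hinj : ∀ v : Fin p → ℝ, X *ᵥ v = 0 → v = 0 := by
    intro v hv
    have h0 : ∑ j, v j • (fun i => X i j : Fin n → ℝ) = 0 := by
      funext i
      have := congrFun hv i
      simpa [Matrix.mulVec, dotProduct, Finset.sum_apply, mul_comm] using this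
    have := Fintype.linearIndependent_iff.mp hX v h0
    funext j; exact this j
  -- positive definiteness
  have hpos : ∀ β, (A β).PosDef := by
    intro β
    refine Matrix.posDef_iff_dotProduct_mulVec.mpr ⟨?_, ?_⟩
    · show (A β)ᴴ = A β
      rw [hA]
      simp [Matrix.conjTranspose_mul, Matrix.diagonal_conjTranspose, Matrix.mul_assoc]
    · intro x hx
      have hx0 : X *ᵥ x ≠ 0 := fun h => hx (hinj x h)
      obtain ⟨i1, hi1⟩ : ∃ i, (X *ᵥ x) i ≠ 0 := by
        by_contra h; push_neg at h; exact hx0 (funext h)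
      have hquad : x ⬝ᵥ (A β) *ᵥ x = ∑ i, d β i * ((X *ᵥ x) i) ^ 2 := aux_quad X (d β) x
      have hpos' : 0 < ∑ i, d β i * ((X *ᵥ x) i) ^ 2 := by
        refine Finset.sum_pos' (fun i _ => ?_) ⟨i1, Finset.mem_univ i1, ?_⟩
        · exact mul_nonneg (mul_nonneg (hm i).le (hwpos _).le) (sq_nonneg _)
        · exact mul_pos (mul_pos (hm i1) (hwpos _)) (by positivity)
      simpa [hquad] using hpos'
  have hdetpos : ∀ β, 0 < (A β).det := fun β => (hpos β).det_pos
  -- trace bound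
  set T : ℝ := ∑ i, m i * ∑ j, (X i j) ^ 2 with hT
  have hT0 : 0 ≤ T := Finset.sum_nonneg fun i _ =>
    mul_nonneg (hm i).le (Finset.sum_nonneg fun j _ => sq_nonneg _)
  have htrace : ∀ β, (A β).trace ≤ T := by
    intro β
    rw [hA, aux_trace]
    refine Finset.sum_le_sum fun i _ => ?_
    have h1 : d β i ≤ m i := by
      simp only [hd]
      nlinarith [hw1 (zv β i), hm i]
    exact mul_le_mul_of_nonneg_right h1 (Finset.sum_nonneg fun j _ => sq_nonneg _)
  -- constants
  set C1 : ℝ := ∑ i, 4 * m i with hC1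
  have hC10 : 0 ≤ C1 := Finset.sum_nonneg fun i _ => by nlinarith [hm i]
  set C' : ℝ := max (C1 * T ^ (p - 1)) 1 with hC'
  have hC'1 : (1 : ℝ) ≤ C' := le_max_right _ _
  have hC'0 : 0 < C' := lt_of_lt_of_le one_pos hC'1
  -- norm identity
  have hnorm : ∀ β : EuclideanSpace ℝ (Fin p), ∑ j, (β j) ^ 2 = ‖β‖ ^ 2 := by
    intro β
    rw [EuclideanSpace.norm_eq, Real.sq_sqrt (Finset.sum_nonneg fun j _ => sq_nonneg _)]
    exact Finset.sum_congr rfl fun j _ => by rw [Real.norm_eq_abs, sq_abs]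
  -- the key coercivity bound
  have hbound : ∀ β : EuclideanSpace ℝ (Fin p), β ≠ 0 →
      lstar β ≤ (1 / 2) * Real.log C' - Real.log ‖β‖ := by
    intro β hβ
    have hβn : 0 < ‖β‖ := norm_pos_iff.mpr hβ
    obtain ⟨j0, hj0⟩ : ∃ j, β j ≠ 0 := by
      by_contra h; push_neg at h
      exact hβ (PiLp.ext h)
    have hp : 0 < p := Nat.lt_of_le_of_lt (Nat.zero_le j0) j0.isLt
    set v : Fin p → ℝ := fun j => ‖β‖⁻¹ * β j with hv
    have hvv : v ⬝ᵥ v = 1 := by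
      rw [dotProduct]
      have : ∀ j ∈ Finset.univ, v j * v j = ‖β‖⁻¹ ^ 2 * (β j) ^ 2 := fun j _ => by
        rw [hv]; ring
      rw [Finset.sum_congr rfl this, ← Finset.mul_sum, hnorm]
      field_simp
    have hXv : X *ᵥ v = fun i => ‖β‖⁻¹ * zv β i := by
      funext i
      simp only [hv, Matrix.mulVec, dotProduct, hzv, Finset.mul_sum]
      exact Finset.sum_congr rfl fun j _ => by ring
    have hquad : v ⬝ᵥ (A β) *ᵥ v ≤ ‖β‖⁻¹ ^ 2 * C1 := by
      rw [aux_quad, hXv]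
      have h1 : ∀ i ∈ Finset.univ, d β i * (‖β‖⁻¹ * zv β i) ^ 2 ≤ ‖β‖⁻¹ ^ 2 * (4 * m i) := by
        intro i _
        have h2 : w (zv β i) * (zv β i) ^ 2 ≤ 4 := hwz _
        have h3 : d β i * (‖β‖⁻¹ * zv β i) ^ 2
            = ‖β‖⁻¹ ^ 2 * (m i * (w (zv β i) * (zv β i) ^ 2)) := by simp only [hd]; ring
        rw [h3]
        have := mul_le_mul_of_nonneg_left h2 (hm i).le
        nlinarith [sq_nonneg ‖β‖⁻¹, hm i]
      calc ∑ i, d β i * (‖β‖⁻¹ * zv β i) ^ 2 ≤ ∑ i, ‖β‖⁻¹ ^ 2 * (4 * m i) :=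
            Finset.sum_le_sum h1
      _ = ‖β‖⁻¹ ^ 2 * C1 := by rw [← Finset.mul_sum, hC1]
    have hdet : (A β).det ≤ ‖β‖⁻¹ ^ 2 * C' := by
      calc (A β).det ≤ (v ⬝ᵥ (A β) *ᵥ v) * T ^ (p - 1) :=
            aux_det_le hp (A β) (hpos β).posSemidef T (htrace β) v hvv
      _ ≤ (‖β‖⁻¹ ^ 2 * C1) * T ^ (p - 1) :=
            mul_le_mul_of_nonneg_right hquad (pow_nonneg hT0 _)
      _ = ‖β‖⁻¹ ^ 2 * (C1 * T ^ (p - 1)) := by ring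
      _ ≤ ‖β‖⁻¹ ^ 2 * C' := by
            exact mul_le_mul_of_nonneg_left (le_max_left _ _) (by positivity)
    have hlog : Real.log (A β).det ≤ Real.log C' - 2 * Real.log ‖β‖ := by
      calc Real.log (A β).det ≤ Real.log (‖β‖⁻¹ ^ 2 * C') :=
            Real.log_le_log (hdetpos β) hdet
      _ = Real.log C' - 2 * Real.log ‖β‖ := by
            rw [Real.log_mul (by positivity) (ne_of_gt hC'0), Real.log_pow, Real.log_inv]
            push_cast; ring
    have hsumle : (∑ i, (y i * (zv β i) - m i * Real.log (1 + Real.exp (zv β i)))) ≤ 0 :=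
      Finset.sum_nonpos fun i _ => hterm i (zv β i)
    rw [hl, hAeq]
    have := hlog
    nlinarith [hsumle, hlog]
  -- continuity of lstar
  have hzcont : ∀ i, Continuous fun β : EuclideanSpace ℝ (Fin p) => zv β i := by
    intro i
    refine continuous_finset_sum _ fun j _ => ?_
    exact continuous_const.mul ((continuous_apply j).comp (PiLp.continuous_ofLp 2 _))
  have hcont : Continuous lstar := by
    have hfun : lstar = fun β =>
      (∑ i, (y i * (zv β i) - m i * Real.log (1 + Real.exp (zv β i)))) +
        (1 / 2) * Real.log ((A β).det) := by
      funext β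
      rw [hl, hAeq]
    rw [hfun]
    have h1 : Continuous fun β : EuclideanSpace ℝ (Fin p) =>
        (∑ i, (y i * (zv β i) - m i * Real.log (1 + Real.exp (zv β i)))) := by
      refine continuous_finset_sum _ fun i _ => ?_
      refine (continuous_const.mul (hzcont i)).sub (continuous_const.mul ?_)
      refine Continuous.log (continuous_const.add (Real.continuous_exp.comp (hzcont i))) ?_
      intro β
      have := Real.exp_pos (zv β i)
      positivity
    have h2 : Continuous fun β : EuclideanSpace ℝ (Fin p) => (A β).det := by
      refine Continuous.matrix_det ?_
      refine Continuous.matrix_mul (Continuous.matrix_mul continuous_const ?_) continuous_const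
      refine Continuous.matrix_diagonal ?_
      refine continuous_pi fun i => ?_
      have : (fun β : EuclideanSpace ℝ (Fin p) => d β i)
          = fun β => m i * (Real.exp (zv β i) / (1 + Real.exp (zv β i)) ^ 2) := by
        funext β; simp only [hd]; rw [hw]
      rw [this]
      refine continuous_const.mul (Continuous.div (Real.continuous_exp.comp (hzcont i))
        (((continuous_const.add (Real.continuous_exp.comp (hzcont i))).pow 2)) fun β => ?_)
      have := Real.exp_pos (zv β i)
      positivity
    exact h1.add (continuous_const.mul (Continuous.log h2 fun β => ne_of_gt (hdetpos β)))
  -- choose radius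
  set M0 : ℝ := max 0 ((1 / 2) * Real.log C' - lstar 0 + 1) with hM0
  set R : ℝ := Real.exp M0 with hR
  have hRpos : 0 < R := Real.exp_pos _
  have hout : ∀ β : EuclideanSpace ℝ (Fin p), R < ‖β‖ → lstar β < lstar 0 := by
    intro β hβR
    have hβ : β ≠ 0 := by
      intro h
      rw [h] at hβR
      simp at hβR
      linarith
    have h1 := hbound β hβ
    have h2 : Real.log R < Real.log ‖β‖ := Real.log_lt_log hRpos hβR
    have h3 : Real.log R = M0 := Real.log_exp _
    have h4 : (1 / 2) * Real.log C' - lstar 0 + 1 ≤ M0 := le_max_right _ _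
    linarith
  -- maximize on the closed ball
  obtain ⟨b, hbK, hbmax⟩ :=
    (isCompact_closedBall (0 : EuclideanSpace ℝ (Fin p)) R).exists_isMaxOn
      ⟨0, Metric.mem_closedBall_self hRpos.le⟩ hcont.continuousOn
  have h0K : (0 : EuclideanSpace ℝ (Fin p)) ∈ Metric.closedBall (0 : EuclideanSpace ℝ (Fin p)) R :=
    Metric.mem_closedBall_self hRpos.le
  have hglobal : ∀ β, lstar β ≤ lstar b := by
    intro β
    rcases le_or_gt ‖β‖ R with hle | hgt
    · exact hbmax (by simpa [Metric.mem_closedBall, dist_zero_right] using hle)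
    · exact le_trans (hout β hgt).le (hbmax h0K)
  refine ⟨⟨b, hglobal⟩, ?_⟩
  refine Bornology.IsBounded.subset (Metric.isBounded_closedBall
    (x := (0 : EuclideanSpace ℝ (Fin p))) (r := R)) ?_
  intro β hβ
  simp only [Metric.mem_closedBall, dist_zero_right]
  by_contra hgt
  push_neg at hgt
  have h1 := hout β hgt
  have h2 := hβ 0
  linarith
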